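/- Lipschitz continuity in the threshold of the Gaussian-smoothed ramp: define, for y ∈ ℝ and δ > 0, the ramp function ψ_{y,δ} : ℝ → ℝ by ψ_{y,δ}(u) = 1 for u ≤ y + 3δ, ψ_{y,δ}(u) = 1 − (u − y − 3δ)/δ for y + 3δ ≤ u ≤ y + 4δ, and ψ_{y,δ}(u) = 0 for u ≥ y + 4δ. Then there exists a universal constant C such that for every δ > 0, h > 0, x ∈ ℝ, and all y₁ ≤ y₂ with y₂ ≤ y₁ + δ: E[ | ψ_{y₂,δ}(x + hN) − ψ_{y₁,δ}(x + hN) | · (N² + 1) ] ≤ C (y₂ − y₁) / h, where N is a standard normal random variable. -/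

import Mathlib

open MeasureTheory ProbabilityTheory

/-- The Gaussian-smoothed ramp's underlying piecewise-linear function: `ψ_{y,δ}(u)` equals `1`
for `u ≤ y + 3δ`, decreases linearly from `1` to `0` on `[y + 3δ, y + 4δ]`, and equals `0` for
`u ≥ y + 4δ`. -/
noncomputable def ramp (y δ u : ℝ) : ℝ :=
  max 0 (min 1 (1 - (u - y - 3 * δ) / δ))

open Real

lemma ramp_eq_one {y δ v : ℝ} (hδ : 0 < δ) (hv : v ≤ y + 3 * δ) : ramp y δ v = 1 := by
  have ht : (1:ℝ) ≤ 1 - (v - y - 3 * δ) / δ := by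
    have : (v - y - 3 * δ) / δ ≤ 0 := div_nonpos_of_nonpos_of_nonneg (by linarith) hδ.le
    linarith
  rw [ramp, min_eq_left ht, max_eq_right zero_le_one]

lemma ramp_eq_zero {y δ v : ℝ} (hδ : 0 < δ) (hv : y + 4 * δ ≤ v) : ramp y δ v = 0 := by
  have ht : 1 - (v - y - 3 * δ) / δ ≤ 0 := by
    have : (1:ℝ) ≤ (v - y - 3 * δ) / δ := by
      rw [le_div_iff₀ hδ]; linarith
    linarith
  rw [ramp, max_eq_left]
  exact le_trans (min_le_right _ _) ht

lemma ramp_lip {y₁ y₂ δ : ℝ} (hδ : 0 < δ) (v : ℝ) :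
    |ramp y₂ δ v - ramp y₁ δ v| ≤ |y₂ - y₁| / δ := by
  rw [ramp, ramp, max_comm 0 _, max_comm 0 _]
  calc |max (min 1 (1 - (v - y₂ - 3 * δ) / δ)) 0 - max (min 1 (1 - (v - y₁ - 3 * δ) / δ)) 0|
      ≤ |min 1 (1 - (v - y₂ - 3 * δ) / δ) - min 1 (1 - (v - y₁ - 3 * δ) / δ)| :=
        abs_max_sub_max_le_abs _ _ _
    _ ≤ max |(1:ℝ) - 1| |(1 - (v - y₂ - 3 * δ) / δ) - (1 - (v - y₁ - 3 * δ) / δ)| :=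
        abs_min_sub_min_le_max _ _ _ _
    _ ≤ |y₂ - y₁| / δ := by
        rw [show (1 - (v - y₂ - 3 * δ) / δ) - (1 - (v - y₁ - 3 * δ) / δ) = (y₂ - y₁) / δ by
          field_simp; ring]
        rw [sub_self, abs_zero, abs_div, abs_of_pos hδ]
        exact max_le (by positivity) (le_refl _)

lemma pdf_bd (u : ℝ) : gaussianPDFReal 0 1 u * (u ^ 2 + 1) ≤ 1 := by
  rw [gaussianPDFReal]
  have hπ : (2:ℝ) ≤ Real.sqrt (2 * π * 1) := by
    have h4 : (4:ℝ) ≤ 2 * π * 1 := by nlinarith [Real.pi_gt_three]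
    nlinarith [Real.sq_sqrt (by linarith : (0:ℝ) ≤ 2 * π * 1), Real.sqrt_nonneg (2 * π * 1)]
  have hs : (0:ℝ) < Real.sqrt (2 * π * 1) := by linarith
  rw [NNReal.coe_one]
  have key : Real.exp (-(u - 0)^2 / (2*1)) * (u^2+1) ≤ 2 := by
    have hexp : u ^ 2 + 1 ≤ 2 * Real.exp ((u - 0)^2 / (2*1)) := by
      have := Real.add_one_le_exp ((u-0)^2 / (2*1))
      nlinarith [sq_nonneg u]
    rw [show -(u-0)^2 / (2*1) = -((u-0)^2 / (2*1)) by ring, Real.exp_neg]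
    rw [inv_mul_le_iff₀ (Real.exp_pos _)]
    linarith
  calc (√(2 * π * 1))⁻¹ * rexp (-(u - 0) ^ 2 / (2 * 1)) * (u ^ 2 + 1)
      = (√(2 * π * 1))⁻¹ * (rexp (-(u - 0) ^ 2 / (2 * 1)) * (u ^ 2 + 1)) := by ring
    _ ≤ (√(2 * π * 1))⁻¹ * 2 := mul_le_mul_of_nonneg_left key (by positivity)
    _ ≤ 1 := by rw [inv_mul_le_iff₀ hs]; linarith

/-- **Lipschitz continuity in the threshold of the Gaussian-smoothed ramp.**
There is a universal constant `C` such that for every `δ > 0`, `h > 0`, `x ∈ ℝ` and all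
`y₁ ≤ y₂ ≤ y₁ + δ`,
`E[|ψ_{y₂,δ}(x + hN) − ψ_{y₁,δ}(x + hN)| (N² + 1)] ≤ C (y₂ − y₁)/h`,
where `N` is standard normal. -/
theorem stmt_15 :
    ∃ C : ℝ, 0 < C ∧
      ∀ (δ h x y₁ y₂ : ℝ), 0 < δ → 0 < h → y₁ ≤ y₂ → y₂ ≤ y₁ + δ →
        ∫ u, |ramp y₂ δ (x + h * u) - ramp y₁ δ (x + h * u)| * (u ^ 2 + 1)
            ∂(gaussianReal 0 1) ≤
          C * (y₂ - y₁) / h := by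
  refine ⟨2, two_pos, fun δ h x y₁ y₂ hδ hh h12 h21 => ?_⟩
  set a := (y₁ + 3 * δ - x) / h with ha
  set b := (y₂ + 4 * δ - x) / h with hb
  have hab : a ≤ b := by
    rw [ha, hb, div_le_div_iff₀ hh hh]
    nlinarith
  set Δ := y₂ - y₁ with hΔ
  have hΔ0 : 0 ≤ Δ := by linarith
  set g : ℝ → ℝ := (Set.Icc a b).indicator (fun _ => Δ / δ) with hg
  have hconv : ∫ u, |ramp y₂ δ (x + h * u) - ramp y₁ δ (x + h * u)| * (u ^ 2 + 1)
      ∂(gaussianReal 0 1)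
      = ∫ u, gaussianPDFReal 0 1 u *
          (|ramp y₂ δ (x + h * u) - ramp y₁ δ (x + h * u)| * (u ^ 2 + 1)) := by
    rw [gaussianReal_of_var_ne_zero _ one_ne_zero]
    have : ∀ u, gaussianPDF 0 1 u = ((fun w => (gaussianPDFReal 0 1 w).toNNReal) u : ENNReal) :=
      fun u => rfl
    rw [withDensity_congr_ae (ae_of_all _ this), integral_withDensity_eq_integral_smul
      ((measurable_gaussianPDFReal 0 1).real_toNNReal) _]
    congr 1
    ext u
    rw [NNReal.smul_def, Real.coe_toNNReal _ (gaussianPDFReal_nonneg 0 1 u), smul_eq_mul]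
  rw [hconv]
  have hbd : ∀ u, gaussianPDFReal 0 1 u *
      (|ramp y₂ δ (x + h * u) - ramp y₁ δ (x + h * u)| * (u ^ 2 + 1)) ≤ g u := by
    intro u
    by_cases hu : u ∈ Set.Icc a b
    · rw [hg, Set.indicator_of_mem hu]
      have h1 : |ramp y₂ δ (x + h * u) - ramp y₁ δ (x + h * u)| ≤ Δ / δ := by
        have := ramp_lip (y₁ := y₁) (y₂ := y₂) hδ (x + h * u)
        rwa [abs_of_nonneg hΔ0] at this
      have h2 := pdf_bd u
      have h3 : (0:ℝ) ≤ u ^ 2 + 1 := by positivity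
      have h4 := gaussianPDFReal_nonneg 0 1 u
      calc gaussianPDFReal 0 1 u * (|ramp y₂ δ (x + h * u) - ramp y₁ δ (x + h * u)| * (u ^ 2 + 1))
          = (gaussianPDFReal 0 1 u * (u ^ 2 + 1)) *
            |ramp y₂ δ (x + h * u) - ramp y₁ δ (x + h * u)| := by ring
        _ ≤ 1 * (Δ / δ) := mul_le_mul h2 h1 (abs_nonneg _) zero_le_one
        _ = Δ / δ := one_mul _
    · rw [hg, Set.indicator_of_notMem hu]
      rw [Set.mem_Icc, not_and_or, not_le, not_le] at hu
      have hz : ramp y₂ δ (x + h * u) - ramp y₁ δ (x + h * u) = 0 := by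
        rcases hu with hu | hu
        · have hv : x + h * u ≤ y₁ + 3 * δ := by
            have := (mul_lt_mul_iff_right₀ hh).mpr hu
            rw [ha, mul_div_cancel₀ _ hh.ne'] at this
            linarith
          rw [ramp_eq_one hδ hv, ramp_eq_one hδ (by linarith), sub_self]
        · have hv : y₂ + 4 * δ ≤ x + h * u := by
            have := (mul_lt_mul_iff_right₀ hh).mpr hu
            rw [hb, mul_div_cancel₀ _ hh.ne'] at this
            linarith
          rw [ramp_eq_zero hδ hv, ramp_eq_zero hδ (by linarith), sub_self]
      rw [hz, abs_zero, zero_mul, mul_zero]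
  have hgint : Integrable g := by
    rw [hg]
    exact (integrable_indicator_iff measurableSet_Icc).mpr
      (integrableOn_const measure_Icc_lt_top.ne)
  calc ∫ u, gaussianPDFReal 0 1 u *
        (|ramp y₂ δ (x + h * u) - ramp y₁ δ (x + h * u)| * (u ^ 2 + 1))
      ≤ ∫ u, g u := integral_mono_of_nonneg
        (ae_of_all _ fun u => mul_nonneg (gaussianPDFReal_nonneg 0 1 u) (by positivity)) hgint (ae_of_all _ hbd)
    _ = (Δ / δ) * (b - a) := by
        rw [hg, integral_indicator_const _ measurableSet_Icc, Real.volume_real_Icc_of_le hab, smul_eq_mul,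
          mul_comm]
    _ ≤ 2 * Δ / h := by
        have hba : b - a = (Δ + δ) / h := by
          rw [ha, hb, hΔ]; field_simp; ring
        rw [hba, div_mul_div_comm, div_le_div_iff₀ (by positivity) hh]
        nlinarith [mul_nonneg (mul_nonneg hΔ0 hh.le) (by linarith : (0:ℝ) ≤ δ - Δ)]
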